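/- Let E be a Banach space, J ⊆ ℝ a nondegenerate interval, and r a natural number (or ∞). Then the map Λ : C^{r+1}(J, E) → C(J, E) × C^r(J, E), γ ↦ (γ, γ'), is a linear topological embedding with closed image, where all function spaces carry the compact-open C^k topologies. -/

import Mathlib

open scoped UniformConvergence

/-- The space `C^r(J,E)` of `r`-times continuously differentiable maps on `J`
(realized as functions on `ℝ` vanishing off `J`, which are `C^r` on `J`). -/
def CrFun (E : Type*) [NormedAddCommGroup E] [NormedSpace ℝ E]
    (J : Set ℝ) (r : ℕ) : Type _ :=
  {γ : ℝ → E // ContDiffOn ℝ r γ J ∧ ∀ t ∉ J, γ t = 0}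

namespace CrFun

variable {E : Type*} [NormedAddCommGroup E] [NormedSpace ℝ E] {J : Set ℝ} {r : ℕ}

instance : Add (CrFun E J r) :=
  ⟨fun γ η => ⟨γ.1 + η.1, ⟨γ.2.1.add η.2.1,
    fun t ht => by simp [Pi.add_apply, γ.2.2 t ht, η.2.2 t ht]⟩⟩⟩

instance : SMul ℝ (CrFun E J r) :=
  ⟨fun a γ => ⟨a • γ.1, ⟨γ.2.1.const_smul a,
    fun t ht => by simp [Pi.smul_apply, γ.2.2 t ht]⟩⟩⟩

/-- The family of iterated derivatives, viewed in the space of functions on `J`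
with the topology of uniform convergence on compact subsets of `J`
(i.e. the compact-open topology). -/
noncomputable def iota (γ : CrFun E J r) :
    Fin (r + 1) → (J →ᵤ[{K : Set J | IsCompact K}] E) :=
  fun i => UniformOnFun.ofFun _
    (fun x : J => iteratedDerivWithin (i : ℕ) γ.1 J (x : ℝ))

/-- The compact-open `C^r`-topology. -/
noncomputable instance : TopologicalSpace (CrFun E J r) :=
  TopologicalSpace.induced iota inferInstance

end CrFun



section Aux

variable {E : Type*} [NormedAddCommGroup E] [NormedSpace ℝ E] {J : Set ℝ} {r : ℕ}

-- cast helper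
lemma crfun_cast (r : ℕ) : ((r + 1 : ℕ) : WithTop ℕ∞) = (r : WithTop ℕ∞) + 1 := by
  norm_cast

lemma crfun_one_le (r : ℕ) : (1 : WithTop ℕ∞) ≤ ((r + 1 : ℕ) : WithTop ℕ∞) := by
  rw [crfun_cast]
  exact le_add_self

/-- first component of Λ -/
def fstPart (γ : CrFun E J (r + 1)) : CrFun E J 0 :=
  ⟨γ.1, γ.2.1.of_le (by exact_mod_cast Nat.zero_le _), γ.2.2⟩

/-- second component of Λ -/
noncomputable def sndPart (hJu : UniqueDiffOn ℝ J) (γ : CrFun E J (r + 1)) : CrFun E J r :=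
  ⟨J.indicator (derivWithin γ.1 J),
    (γ.2.1.derivWithin hJu (le_of_eq (crfun_cast r).symm)).congr
      (fun x hx => Set.indicator_of_mem hx _),
    fun t ht => Set.indicator_of_notMem ht _⟩

lemma iota_fstPart (γ : CrFun E J (r + 1)) (i : Fin 1) :
    CrFun.iota (fstPart γ) i = CrFun.iota γ 0 := by
  have : (i : ℕ) = 0 := by omega
  simp only [CrFun.iota, fstPart, this]
  rfl

lemma iota_sndPart (hJu : UniqueDiffOn ℝ J) (γ : CrFun E J (r + 1)) (i : Fin (r + 1)) :
    CrFun.iota (sndPart hJu γ) i = CrFun.iota γ i.succ := by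
  simp only [CrFun.iota, sndPart]
  congr 1
  funext x
  have h1 : iteratedDerivWithin (i : ℕ) (J.indicator (derivWithin γ.1 J)) J (x : ℝ)
      = iteratedDerivWithin (i : ℕ) (derivWithin γ.1 J) J (x : ℝ) :=
    iteratedDerivWithin_congr (fun t ht => Set.indicator_of_mem ht _) x.2
  rw [h1, Fin.val_succ, iteratedDerivWithin_succ']

end Aux

section FTC

variable {E : Type*} [NormedAddCommGroup E] [NormedSpace ℝ E] [CompleteSpace E]
  {J : Set ℝ} {r : ℕ}

/-- forward fundamental theorem for `C^{r+1}` functions -/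
lemma fund_aux (hJconv : Convex ℝ J) (hJu : UniqueDiffOn ℝ J)
    (γ : CrFun E J (r + 1)) {x y : ℝ} (hx : x ∈ J) (hy : y ∈ J) (hxy : x ≤ y) :
    γ.1 y - γ.1 x = ∫ t in x..y, derivWithin γ.1 J t := by
  have hIcc : Set.Icc x y ⊆ J := hJconv.ordConnected.out hx hy
  have hg : ContinuousOn (derivWithin γ.1 J) J :=
    γ.2.1.continuousOn_derivWithin hJu (crfun_one_le r)
  have hint : IntervalIntegrable (derivWithin γ.1 J) MeasureTheory.volume x y :=
    (hg.mono (by rwa [Set.uIcc_of_le hxy])).intervalIntegrable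
  have hcont : ContinuousOn γ.1 (Set.Icc x y) := γ.2.1.continuousOn.mono hIcc
  have hderiv : ∀ t ∈ Set.Ioo x y, HasDerivWithinAt γ.1 (derivWithin γ.1 J t) (Set.Ioi t) t := by
    intro t ht
    have htJ : t ∈ interior J := by
      have : Set.Ioo x y ⊆ interior J := by
        rw [← interior_Icc]; exact interior_mono hIcc
      exact this ht
    have hdiff : DifferentiableWithinAt ℝ γ.1 J t :=
      (γ.2.1.differentiableOn (by simp)) t (interior_subset htJ)
    exact (hdiff.hasDerivWithinAt.hasDerivAt (mem_interior_iff_mem_nhds.1 htJ)).hasDerivWithinAt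
  exact (intervalIntegral.integral_eq_sub_of_hasDeriv_right_of_le hxy hcont hderiv hint).symm

lemma fund (hJconv : Convex ℝ J) (hJu : UniqueDiffOn ℝ J)
    (γ : CrFun E J (r + 1)) {x y : ℝ} (hx : x ∈ J) (hy : y ∈ J) :
    γ.1 y - γ.1 x = ∫ t in x..y, (sndPart hJu γ).1 t := by
  have hcongr : ∀ {a b : ℝ}, a ∈ J → b ∈ J →
      (∫ t in a..b, (sndPart hJu γ).1 t) = ∫ t in a..b, derivWithin γ.1 J t := by
    intro a b ha hb
    exact intervalIntegral.integral_congr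
      (fun t ht => Set.indicator_of_mem (hJconv.ordConnected.uIcc_subset ha hb ht) _)
  rcases le_total x y with h | h
  · rw [hcongr hx hy]; exact fund_aux hJconv hJu γ hx hy h
  · rw [hcongr hx hy, intervalIntegral.integral_symm,
      ← fund_aux hJconv hJu γ hy hx h]
    abel

end FTC

section Nhds

variable {E : Type*} [NormedAddCommGroup E] [NormedSpace ℝ E] {J : Set ℝ} {r : ℕ}

open Filter Topology

lemma eval_nhds (g₀ : CrFun E J r) (K : Set J) (hK : IsCompact K) {ε : ℝ} (hε : 0 < ε) :
    {g : CrFun E J r | ∀ x : J, x ∈ K → dist (g.1 x) (g₀.1 x) < ε} ∈ 𝓝 g₀ := by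
  have h1 : (𝓝 g₀) = Filter.comap CrFun.iota (𝓝 (CrFun.iota g₀)) := nhds_induced _ _
  rw [h1]
  have hV : {p : E × E | dist p.1 p.2 < ε} ∈ uniformity E := Metric.dist_mem_uniformity hε
  have hne : {K : Set J | IsCompact K}.Nonempty := ⟨∅, isCompact_empty⟩
  have hdir : DirectedOn (· ⊆ ·) {K : Set J | IsCompact K} := fun A hA B hB =>
    ⟨A ∪ B, hA.union hB, Set.subset_union_left, Set.subset_union_right⟩
  have hM : {h : J →ᵤ[{K : Set J | IsCompact K}] E |
      (h, CrFun.iota g₀ 0) ∈ UniformOnFun.gen {K : Set J | IsCompact K} K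
        {p : E × E | dist p.1 p.2 < ε}} ∈ 𝓝 (CrFun.iota g₀ 0) :=
    (UniformOnFun.hasBasis_nhds J E _ _ hne hdir).mem_of_mem (i := (K, {p : E × E | dist p.1 p.2 < ε})) ⟨hK, hV⟩
  refine Filter.mem_comap.2 ⟨(fun F : Fin (r + 1) → (J →ᵤ[{K : Set J | IsCompact K}] E)
      => F 0) ⁻¹' _, (continuous_apply (0 : Fin (r + 1))).continuousAt.preimage_mem_nhds hM, ?_⟩
  intro g hg x hx
  have := hg x hx
  simpa [CrFun.iota, UniformOnFun.gen, iteratedDerivWithin_zero] using this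

end Nhds

section Converse

variable {E : Type*} [NormedAddCommGroup E] [NormedSpace ℝ E] [CompleteSpace E]
  {J : Set ℝ} {r : ℕ}

lemma hasDeriv_of_key (hJconv : Convex ℝ J)
    {f : ℝ → E} {g : ℝ → E} (hgc : ContinuousOn g J)
    (key : ∀ x ∈ J, ∀ y ∈ J, f y - f x = ∫ t in x..y, g t)
    {x : ℝ} (hx : x ∈ J) : HasDerivWithinAt f (g x) J x := by
  rw [hasDerivWithinAt_iff_isLittleO, Asymptotics.isLittleO_iff]
  intro c hc
  rcases Metric.continuousWithinAt_iff.1 (hgc x hx) c hc with ⟨δ, hδ, hδc⟩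
  have hball : {y : ℝ | dist y x < δ} ∈ nhdsWithin x J :=
    nhdsWithin_le_nhds (Metric.ball_mem_nhds x hδ)
  filter_upwards [self_mem_nhdsWithin, hball] with y hyJ hyb
  have hsub : Set.uIcc x y ⊆ J := hJconv.ordConnected.uIcc_subset hx hyJ
  have hgint : IntervalIntegrable g MeasureTheory.volume x y :=
    (hgc.mono hsub).intervalIntegrable
  have h1 : f y - f x = ∫ t in x..y, g t := key x hx y hyJ
  have h2 : (y - x) • g x = ∫ _t in x..y, g x := (intervalIntegral.integral_const _).symm
  have h3 : f y - f x - (y - x) • g x = ∫ t in x..y, (g t - g x) := by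
    rw [h1, h2, ← intervalIntegral.integral_sub hgint intervalIntegrable_const]
  rw [h3]
  have hbd : ∀ t ∈ Set.uIoc x y, ‖g t - g x‖ ≤ c := by
    intro t ht
    have htu : t ∈ Set.uIcc x y := Set.Ioc_subset_Icc_self ht
    have htJ : t ∈ J := hsub htu
    have hdist : dist t x < δ := by
      have := Set.abs_sub_left_of_mem_uIcc htu
      calc dist t x = |t - x| := Real.dist_eq t x
        _ ≤ |y - x| := this
        _ = dist y x := (Real.dist_eq y x).symm
        _ < δ := hyb
    exact le_of_lt (by simpa [dist_eq_norm] using hδc htJ hdist)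
  calc ‖∫ t in x..y, (g t - g x)‖ ≤ c * |y - x| :=
        intervalIntegral.norm_integral_le_of_norm_le_const hbd
    _ = c * ‖y - x‖ := by rw [Real.norm_eq_abs]

lemma contDiffOn_of_key (hJconv : Convex ℝ J) (hJu : UniqueDiffOn ℝ J)
    {f : ℝ → E} {g : ℝ → E} (hg : ContDiffOn ℝ r g J)
    (key : ∀ x ∈ J, ∀ y ∈ J, f y - f x = ∫ t in x..y, g t) :
    ContDiffOn ℝ (r + 1 : ℕ) f J ∧ ∀ x ∈ J, derivWithin f J x = g x := by
  have hder : ∀ x ∈ J, HasDerivWithinAt f (g x) J x :=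
    fun x hx => hasDeriv_of_key hJconv hg.continuousOn key hx
  have hdw : ∀ x ∈ J, derivWithin f J x = g x :=
    fun x hx => (hder x hx).derivWithin (hJu x hx)
  refine ⟨?_, hdw⟩
  rw [crfun_cast, contDiffOn_succ_iff_derivWithin hJu]
  refine ⟨fun x hx => (hder x hx).differentiableWithinAt, ?_, hg.congr hdw⟩
  intro h
  exact absurd h (by simp)

end Converse


open Filter Topology in
/-- For a nondegenerate interval `J ⊆ ℝ` and a Banach space `E`, the map
`Λ : C^{r+1}(J,E) → C(J,E) × C^r(J,E)`, `γ ↦ (γ, γ')`, is a linear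
topological embedding with closed image (all spaces with the compact-open
`C^k` topologies). -/
theorem stmt3 (E : Type*) [NormedAddCommGroup E] [NormedSpace ℝ E]
    [CompleteSpace E] (J : Set ℝ) (hJconv : Convex ℝ J)
    (hJne : (interior J).Nonempty) (r : ℕ) :
    ∃ Λ : CrFun E J (r + 1) → CrFun E J 0 × CrFun E J r,
      (∀ γ : CrFun E J (r + 1),
        (Λ γ).1.1 = γ.1 ∧ ∀ t ∈ J, (Λ γ).2.1 t = derivWithin γ.1 J t) ∧
      (∀ γ η : CrFun E J (r + 1), Λ (γ + η) = Λ γ + Λ η) ∧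
      (∀ (a : ℝ) (γ : CrFun E J (r + 1)), Λ (a • γ) = a • Λ γ) ∧
      Topology.IsEmbedding Λ ∧ IsClosed (Set.range Λ) := by
  have hJu : UniqueDiffOn ℝ J := uniqueDiffOn_convex hJconv hJne
  refine ⟨fun γ => (fstPart γ, sndPart hJu γ), ?_, ?_, ?_, ?_, ?_⟩
  · -- spec
    exact fun γ => ⟨rfl, fun t ht => Set.indicator_of_mem ht _⟩
  · -- additivity
    intro γ η
    refine Prod.ext (Subtype.ext rfl) (Subtype.ext ?_)
    funext t
    by_cases ht : t ∈ J
    · show J.indicator (derivWithin ((γ + η).1) J) t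
        = J.indicator (derivWithin γ.1 J) t + J.indicator (derivWithin η.1 J) t
      rw [Set.indicator_of_mem ht, Set.indicator_of_mem ht, Set.indicator_of_mem ht]
      have h1 : (γ + η).1 = fun y => γ.1 y + η.1 y := rfl
      rw [h1, derivWithin_fun_add
        ((γ.2.1.differentiableOn (by simp)) t ht)
        ((η.2.1.differentiableOn (by simp)) t ht)]
    · show J.indicator (derivWithin ((γ + η).1) J) t
        = J.indicator (derivWithin γ.1 J) t + J.indicator (derivWithin η.1 J) t
      rw [Set.indicator_of_notMem ht, Set.indicator_of_notMem ht,
        Set.indicator_of_notMem ht, add_zero]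
  · -- smul
    intro a γ
    refine Prod.ext (Subtype.ext rfl) (Subtype.ext ?_)
    funext t
    by_cases ht : t ∈ J
    · show J.indicator (derivWithin ((a • γ).1) J) t = a • J.indicator (derivWithin γ.1 J) t
      rw [Set.indicator_of_mem ht, Set.indicator_of_mem ht]
      have h1 : (a • γ).1 = fun y => a • γ.1 y := rfl
      rw [h1, derivWithin_fun_const_smul a
        ((γ.2.1.differentiableOn (by simp)) t ht)]
    · show J.indicator (derivWithin ((a • γ).1) J) t = a • J.indicator (derivWithin γ.1 J) t
      rw [Set.indicator_of_notMem ht, Set.indicator_of_notMem ht, smul_zero]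
  · -- embedding
    have hPcont : Continuous (fun p : CrFun E J 0 × CrFun E J r =>
        (Fin.cases (CrFun.iota p.1 0) (fun j => CrFun.iota p.2 j) :
          Fin (r + 2) → (J →ᵤ[{K : Set J | IsCompact K}] E))) := by
      apply continuous_pi
      intro i
      induction i using Fin.cases with
      | zero =>
        simp only [Fin.cases_zero]
        exact (continuous_apply (0 : Fin 1)).comp
          ((continuous_induced_dom (f := (CrFun.iota : CrFun E J 0 → _))).comp continuous_fst)
      | succ j =>
        simp only [Fin.cases_succ]
        exact (continuous_apply j).comp
          ((continuous_induced_dom (f := (CrFun.iota : CrFun E J r → _))).comp continuous_snd)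
    have hPΛ : (fun p : CrFun E J 0 × CrFun E J r =>
          (Fin.cases (CrFun.iota p.1 0) (fun j => CrFun.iota p.2 j) :
            Fin (r + 2) → (J →ᵤ[{K : Set J | IsCompact K}] E)))
        ∘ (fun γ : CrFun E J (r + 1) => (fstPart γ, sndPart hJu γ)) = CrFun.iota := by
      funext γ i
      induction i using Fin.cases with
      | zero =>
        simp only [Function.comp_apply, Fin.cases_zero]
        exact iota_fstPart γ 0
      | succ j =>
        simp only [Function.comp_apply, Fin.cases_succ]
        exact iota_sndPart hJu γ j
    have hiota_emb : Topology.IsEmbedding (CrFun.iota : CrFun E J (r + 1) → _) := by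
      refine ⟨⟨rfl⟩, ?_⟩
      intro γ η h
      apply Subtype.ext; funext t
      by_cases ht : t ∈ J
      · have := congrFun (congrArg (fun F => UniformOnFun.toFun {K : Set J | IsCompact K}
          (F (0 : Fin (r + 2)))) h) ⟨t, ht⟩
        simpa [CrFun.iota, iteratedDerivWithin_zero] using this
      · rw [γ.2.2 t ht, η.2.2 t ht]
    have hcont1 : Continuous (fstPart : CrFun E J (r + 1) → CrFun E J 0) := by
      apply continuous_induced_rng.2
      have h1 : CrFun.iota ∘ (fstPart : CrFun E J (r + 1) → CrFun E J 0)
          = (fun F : Fin (r + 2) → (J →ᵤ[{K : Set J | IsCompact K}] E) =>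
              fun _ : Fin 1 => F 0) ∘ (CrFun.iota : CrFun E J (r + 1) → _) :=
        funext fun γ => funext fun i => iota_fstPart γ i
      rw [h1]
      exact (continuous_pi fun _ => continuous_apply _).comp
        (continuous_induced_dom (f := (CrFun.iota : CrFun E J (r + 1) → _)))
    have hcont2 : Continuous (sndPart hJu : CrFun E J (r + 1) → CrFun E J r) := by
      apply continuous_induced_rng.2
      have h1 : CrFun.iota ∘ (sndPart hJu : CrFun E J (r + 1) → CrFun E J r)
          = (fun F : Fin (r + 2) → (J →ᵤ[{K : Set J | IsCompact K}] E) =>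
              fun i : Fin (r + 1) => F i.succ) ∘ (CrFun.iota : CrFun E J (r + 1) → _) :=
        funext fun γ => funext fun i => iota_sndPart hJu γ i
      rw [h1]
      exact (continuous_pi fun i => continuous_apply _).comp
        (continuous_induced_dom (f := (CrFun.iota : CrFun E J (r + 1) → _)))
    have hcontΛ : Continuous (fun γ : CrFun E J (r + 1) => (fstPart γ, sndPart hJu γ)) :=
      hcont1.prodMk hcont2
    exact Topology.IsEmbedding.of_comp hcontΛ hPcont (hPΛ ▸ hiota_emb)
  · -- closed range
    apply isClosed_of_closure_subset
    rintro ⟨f, g⟩ hp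
    have key : ∀ x ∈ J, ∀ y ∈ J, f.1 y - f.1 x = ∫ t in x..y, g.1 t := by
      intro x hx y hy
      have hsub : Set.uIcc x y ⊆ J := hJconv.ordConnected.uIcc_subset hx hy
      have hKc : IsCompact (Subtype.val ⁻¹' Set.uIcc x y : Set J) := by
        rw [Subtype.isCompact_iff]
        have himg : Subtype.val '' (Subtype.val ⁻¹' Set.uIcc x y : Set J) = Set.uIcc x y := by
          rw [Subtype.image_preimage_coe]
          exact Set.inter_eq_right.2 hsub
        rw [himg]
        exact isCompact_uIcc
      have hbound : ∀ ε : ℝ, 0 < ε →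
          ‖f.1 y - f.1 x - ∫ t in x..y, g.1 t‖ ≤ (2 + |y - x|) * ε := by
        intro ε hε
        have hN1 := eval_nhds f (Subtype.val ⁻¹' Set.uIcc x y) hKc hε
        have hN2 := eval_nhds g (Subtype.val ⁻¹' Set.uIcc x y) hKc hε
        have hN : ({f' : CrFun E J 0 | ∀ t : J, t ∈ (Subtype.val ⁻¹' Set.uIcc x y : Set J) →
              dist (f'.1 t) (f.1 t) < ε} ×ˢ
            {g' : CrFun E J r | ∀ t : J, t ∈ (Subtype.val ⁻¹' Set.uIcc x y : Set J) →
              dist (g'.1 t) (g.1 t) < ε}) ∈ 𝓝 (f, g) := by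
          rw [nhds_prod_eq]
          exact Filter.prod_mem_prod hN1 hN2
        obtain ⟨q, hqN, γ, hγ⟩ := mem_closure_iff_nhds.1 hp _ hN
        rw [← hγ] at hqN
        obtain ⟨hf', hg'⟩ := hqN
        have hfund : γ.1 y - γ.1 x = ∫ t in x..y, (sndPart hJu γ).1 t :=
          fund hJconv hJu γ hx hy
        have hgint : IntervalIntegrable g.1 MeasureTheory.volume x y :=
          (g.2.1.continuousOn.mono hsub).intervalIntegrable
        have hGint : IntervalIntegrable (sndPart hJu γ).1 MeasureTheory.volume x y :=
          ((sndPart hJu γ).2.1.continuousOn.mono hsub).intervalIntegrable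
        have hDeq : f.1 y - f.1 x - ∫ t in x..y, g.1 t
            = ((f.1 y - γ.1 y) - (f.1 x - γ.1 x))
              - ∫ t in x..y, (g.1 t - (sndPart hJu γ).1 t) := by
          rw [intervalIntegral.integral_sub hgint hGint, ← hfund]
          abel
        rw [hDeq]
        have hIbd : ‖∫ t in x..y, (g.1 t - (sndPart hJu γ).1 t)‖ ≤ ε * |y - x| := by
          apply intervalIntegral.norm_integral_le_of_norm_le_const
          intro t ht
          have htu : t ∈ Set.uIcc x y := Set.Ioc_subset_Icc_self ht
          have h := hg' ⟨t, hsub htu⟩ htu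
          rw [dist_eq_norm] at h
          rw [← norm_neg]
          simpa [neg_sub] using h.le
        have hy' := hf' ⟨y, hy⟩ (Set.right_mem_uIcc)
        have hx' := hf' ⟨x, hx⟩ (Set.left_mem_uIcc)
        rw [dist_eq_norm] at hy' hx'
        calc ‖((f.1 y - γ.1 y) - (f.1 x - γ.1 x))
              - ∫ t in x..y, (g.1 t - (sndPart hJu γ).1 t)‖
            ≤ ‖(f.1 y - γ.1 y) - (f.1 x - γ.1 x)‖
              + ‖∫ t in x..y, (g.1 t - (sndPart hJu γ).1 t)‖ := norm_sub_le _ _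
          _ ≤ (‖f.1 y - γ.1 y‖ + ‖f.1 x - γ.1 x‖) + ε * |y - x| :=
              add_le_add (norm_sub_le _ _) hIbd
          _ ≤ (ε + ε) + ε * |y - x| := by
              have h1 : ‖f.1 y - γ.1 y‖ ≤ ε := by rw [← norm_neg, neg_sub]; exact hy'.le
              have h2 : ‖f.1 x - γ.1 x‖ ≤ ε := by rw [← norm_neg, neg_sub]; exact hx'.le
              linarith
          _ = (2 + |y - x|) * ε := by ring
      have hD0 : f.1 y - f.1 x - (∫ t in x..y, g.1 t) = 0 := by
        rw [← norm_le_zero_iff]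
        refine le_of_forall_pos_le_add ?_
        intro ε' hε'
        have h2 : (0 : ℝ) < 2 + |y - x| := by positivity
        calc ‖f.1 y - f.1 x - ∫ t in x..y, g.1 t‖
            ≤ (2 + |y - x|) * (ε' / (2 + |y - x|)) := hbound _ (by positivity)
          _ = ε' := by field_simp
          _ ≤ 0 + ε' := by linarith
      exact sub_eq_zero.1 hD0
    obtain ⟨hcd, hdw⟩ := contDiffOn_of_key hJconv hJu g.2.1 key
    refine ⟨⟨f.1, hcd, f.2.2⟩, ?_⟩
    refine Prod.ext (Subtype.ext rfl) (Subtype.ext ?_)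
    funext t
    by_cases ht : t ∈ J
    · show J.indicator (derivWithin f.1 J) t = g.1 t
      rw [Set.indicator_of_mem ht]
      exact hdw t ht
    · show J.indicator (derivWithin f.1 J) t = g.1 t
      rw [Set.indicator_of_notMem ht]
      exact (g.2.2 t ht).symm
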